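/- Let f_n(t,u_{n-1},u_n,u_{n+1}), τ_n(t,u_n), φ_n(t,u_n) (n ∈ ℤ) be continuously differentiable real functions satisfying the determining equation for Lie point symmetries of the Volterra-type equation identically. Then for all n ∈ ℤ and all real values of the jet variables the following two relations hold pointwise: (∂f_{n+1}/∂u_{n+2})(t,u_n,u_{n+1},u_{n+2}) · (∂f_n/∂u_{n+1})(t,u_{n-1},u_n,u_{n+1}) · (τ_n(t,u_n) − τ_{n+1}(t,u_{n+1})) = 0, and (∂f_{n-1}/∂u_{n-2})(t,u_{n-2},u_{n-1},u_n) · (∂f_n/∂u_{n-1})(t,u_{n-1},u_n,u_{n+1}) · (τ_n(t,u_n) − τ_{n-1}(t,u_{n-1})) = 0. -/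
import Mathlib


/-- The determining equation for Lie point symmetries of the Volterra-type
differential–difference equation `u̇ₙ = fₙ(t, uₙ₋₁, uₙ, uₙ₊₁)`, with point-symmetry
characteristic `Qₙ = φₙ(t,uₙ) − τₙ(t,uₙ) u̇ₙ`, required to hold identically in the
independent jet variables `t, uₙ₋₂, uₙ₋₁, uₙ, uₙ₊₁, uₙ₊₂`.
The arguments of `f n` are `(t, u_{n-1}, u_n, u_{n+1})`. -/
def VolterraDetEq (f : ℤ → ℝ → ℝ → ℝ → ℝ → ℝ) (τ φ : ℤ → ℝ → ℝ → ℝ) : Prop :=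
  ∀ (n : ℤ) (t um2 um1 u0 up1 up2 : ℝ),
    (deriv (fun z => f n t z u0 up1) um1) *
        (φ (n - 1) t um1 - τ (n - 1) t um1 * f (n - 1) t um2 um1 u0) +
      (deriv (fun z => f n t um1 z up1) u0) *
        (φ n t u0 - τ n t u0 * f n t um1 u0 up1) +
      (deriv (fun z => f n t um1 u0 z) up1) *
        (φ (n + 1) t up1 - τ (n + 1) t up1 * f (n + 1) t u0 up1 up2) +
      (deriv (fun s => τ n s u0) t + deriv (fun z => τ n t z) u0 * f n t um1 u0 up1) *
        f n t um1 u0 up1 +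
      τ n t u0 *
        (deriv (fun s => f n s um1 u0 up1) t +
          ((deriv (fun z => f n t z u0 up1) um1) * f (n - 1) t um2 um1 u0 +
            (deriv (fun z => f n t um1 z up1) u0) * f n t um1 u0 up1 +
            (deriv (fun z => f n t um1 u0 z) up1) * f (n + 1) t u0 up1 up2)) -
      deriv (fun s => φ n s u0) t -
      deriv (fun z => φ n t z) u0 * f n t um1 u0 up1 = 0

/-- Eq. (3.9): differentiating the determining equation of a Volterra-type equation with
respect to `uₙ₊₂` and to `uₙ₋₂` yields the two pointwise relations
`f_{n+1,u_{n+2}} f_{n,u_{n+1}} (τₙ − τₙ₊₁) = 0` and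
`f_{n-1,u_{n-2}} f_{n,u_{n-1}} (τₙ − τₙ₋₁) = 0`. -/
theorem volterra_tau_relations
    (f : ℤ → ℝ → ℝ → ℝ → ℝ → ℝ) (τ φ : ℤ → ℝ → ℝ → ℝ)
    (hf : ∀ n, ContDiff ℝ 1 (fun p : ℝ × ℝ × ℝ × ℝ => f n p.1 p.2.1 p.2.2.1 p.2.2.2))
    (hτ : ∀ n, ContDiff ℝ 1 (fun p : ℝ × ℝ => τ n p.1 p.2))
    (hφ : ∀ n, ContDiff ℝ 1 (fun p : ℝ × ℝ => φ n p.1 p.2))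
    (hdet : VolterraDetEq f τ φ) :
    ∀ (n : ℤ) (t um2 um1 u0 up1 up2 : ℝ),
      (deriv (fun z => f (n + 1) t u0 up1 z) up2) *
          (deriv (fun z => f n t um1 u0 z) up1) * (τ n t u0 - τ (n + 1) t up1) = 0 ∧
      (deriv (fun z => f (n - 1) t z um1 u0) um2) *
          (deriv (fun z => f n t z u0 up1) um1) * (τ n t u0 - τ (n - 1) t um1) = 0 := by
  intro n t um2 um1 u0 up1 up2
  constructor
  · -- relation obtained from the `uₙ₊₂`-dependence
    have key : ∀ z : ℝ,
        (deriv (fun z => f n t um1 u0 z) up1) * (τ n t u0 - τ (n + 1) t up1) *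
          (f (n + 1) t u0 up1 z - f (n + 1) t u0 up1 up2) = 0 := by
      intro z
      linear_combination hdet n t um2 um1 u0 up1 z - hdet n t um2 um1 u0 up1 up2
    by_cases hA : (deriv (fun z => f n t um1 u0 z) up1) * (τ n t u0 - τ (n + 1) t up1) = 0
    · calc (deriv (fun z => f (n + 1) t u0 up1 z) up2) *
            (deriv (fun z => f n t um1 u0 z) up1) * (τ n t u0 - τ (n + 1) t up1)
          = (deriv (fun z => f (n + 1) t u0 up1 z) up2) *
            ((deriv (fun z => f n t um1 u0 z) up1) * (τ n t u0 - τ (n + 1) t up1)) := by ring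
        _ = 0 := by rw [hA, mul_zero]
    · have hconst : (fun z => f (n + 1) t u0 up1 z) = fun _ => f (n + 1) t u0 up1 up2 := by
        funext z
        have := key z
        rcases mul_eq_zero.mp this with h | h
        · exact absurd h hA
        · exact sub_eq_zero.mp h
      rw [hconst, deriv_const]
      ring
  · -- relation obtained from the `uₙ₋₂`-dependence
    have key : ∀ z : ℝ,
        (deriv (fun z => f n t z u0 up1) um1) * (τ n t u0 - τ (n - 1) t um1) *
          (f (n - 1) t z um1 u0 - f (n - 1) t um2 um1 u0) = 0 := by
      intro z
      linear_combination hdet n t z um1 u0 up1 up2 - hdet n t um2 um1 u0 up1 up2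
    by_cases hA : (deriv (fun z => f n t z u0 up1) um1) * (τ n t u0 - τ (n - 1) t um1) = 0
    · calc (deriv (fun z => f (n - 1) t z um1 u0) um2) *
            (deriv (fun z => f n t z u0 up1) um1) * (τ n t u0 - τ (n - 1) t um1)
          = (deriv (fun z => f (n - 1) t z um1 u0) um2) *
            ((deriv (fun z => f n t z u0 up1) um1) * (τ n t u0 - τ (n - 1) t um1)) := by ring
        _ = 0 := by rw [hA, mul_zero]
    · have hconst : (fun z => f (n - 1) t z um1 u0) = fun _ => f (n - 1) t um2 um1 u0 := by
        funext z
        have := key z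
        rcases mul_eq_zero.mp this with h | h
        · exact absurd h hA
        · exact sub_eq_zero.mp h
      rw [hconst, deriv_const]
      ring
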